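/- Let (Ω, ℱ) be a measurable space, let p be a probability measure on Ω, and let h : Ω → ℝ be a bounded measurable function. Set Z = ∫ exp(−h) dp and let q* be the measure with density exp(−h)/Z with respect to p (i.e. q* = p.withDensity (fun ω => exp(−h ω)/Z)). Then q* is a probability measure and KL(q* ‖ p) + ∫ h dq* = − log Z. Consequently q* attains the minimum of q ↦ KL(q ‖ p) + ∫ h dq over all probability measures q absolutely continuous with respect to p. -/

import Mathlib

open MeasureTheory Real

/-- The Kullback–Leibler divergence of `q` from `p`: equal to `∫ log (dq/dp) dq` when
`q ≪ p` (with value `+∞` when that extended-valued integral diverges), and `+∞` otherwise. -/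
noncomputable def klDiv {Ω : Type*} [MeasurableSpace Ω] (q p : Measure Ω) : EReal :=
  open scoped Classical in
  if q ≪ p ∧ Integrable (llr q p) q then ((∫ ω, llr q p ω ∂q : ℝ) : EReal) else ⊤

/-- Gibbs' inequality: the KL integral is nonnegative. -/
lemma kl_nonneg_aux {Ω : Type*} [MeasurableSpace Ω] (q m : Measure Ω)
    [IsProbabilityMeasure q] [IsProbabilityMeasure m] (hqm : q ≪ m)
    (hint : Integrable (llr q m) q) : 0 ≤ ∫ x, llr q m x ∂q := by
  have h1 : Integrable (llr m q) q := by
    refine (integrable_congr (neg_llr hqm)).mp hint.neg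
  have h2 : Integrable (fun x => (m.rnDeriv q x).toReal - 1) q :=
    (Measure.integrable_toReal_rnDeriv).sub (integrable_const 1)
  have hle : ∫ x, llr m q x ∂q ≤ ∫ x, ((m.rnDeriv q x).toReal - 1) ∂q := by
    refine integral_mono_ae h1 h2 ?_
    filter_upwards [Measure.rnDeriv_pos' hqm, Measure.rnDeriv_lt_top m q] with x hx hx'
    exact log_le_sub_one_of_pos (ENNReal.toReal_pos hx.ne' hx'.ne)
  have h3 : ∫ x, ((m.rnDeriv q x).toReal - 1) ∂q ≤ 0 := by
    rw [integral_sub Measure.integrable_toReal_rnDeriv (integrable_const 1)]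
    simp only [integral_const, measure_univ, probReal_univ, ENNReal.toReal_one, smul_eq_mul, one_mul]
    have := Measure.setIntegral_toReal_rnDeriv_le (μ := m) (ν := q) (s := Set.univ)
      (measure_ne_top m _)
    rw [setIntegral_univ] at this
    have hm : (m Set.univ).toReal = 1 := by simp
    linarith [this, probReal_univ (μ := m)]
  have hneg : ∫ x, llr m q x ∂q = - ∫ x, llr q m x ∂q := by
    rw [← integral_neg]
    exact integral_congr_ae (neg_llr hqm).symm
  linarith [hle.trans h3, hneg ▸ (hle.trans h3)]

theorem stmt1 {Ω : Type*} [MeasurableSpace Ω] (p : Measure Ω) [IsProbabilityMeasure p]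
    (h : Ω → ℝ) (hmeas : Measurable h) (hbdd : ∃ M : ℝ, ∀ ω, |h ω| ≤ M)
    (Z : ℝ) (hZ : Z = ∫ ω, Real.exp (- h ω) ∂p)
    (qstar : Measure Ω)
    (hqstar : qstar = p.withDensity (fun ω => ENNReal.ofReal (Real.exp (- h ω) / Z))) :
    IsProbabilityMeasure qstar ∧
    klDiv qstar p + ((∫ ω, h ω ∂qstar : ℝ) : EReal) = ((- Real.log Z : ℝ) : EReal) ∧
    ∀ q : Measure Ω, IsProbabilityMeasure q → q ≪ p →
      klDiv qstar p + ((∫ ω, h ω ∂qstar : ℝ) : EReal)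
        ≤ klDiv q p + ((∫ ω, h ω ∂q : ℝ) : EReal) := by
  obtain ⟨M, hM⟩ := hbdd
  -- integrability of exp(-h) and of h w.r.t. any finite measure
  have hexp_int : Integrable (fun ω => Real.exp (- h ω)) p := by
    refine Integrable.mono' (integrable_const (Real.exp M)) ?_ ?_
    · exact (hmeas.neg.exp).aestronglyMeasurable
    · refine Filter.Eventually.of_forall fun ω => ?_
      rw [Real.norm_eq_abs, abs_of_pos (exp_pos _)]
      exact exp_le_exp.mpr (by linarith [(abs_le.mp (hM ω)).1])
  have hh_int : ∀ (μ : Measure Ω) [IsProbabilityMeasure μ], Integrable h μ := by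
    intro μ _
    exact Integrable.mono' (integrable_const M) hmeas.aestronglyMeasurable
      (Filter.Eventually.of_forall fun ω => by simpa using hM ω)
  -- qstar is a tilted measure
  have htilted : qstar = p.tilted (fun ω => - h ω) := by
    rw [hqstar, Measure.tilted, hZ]
  have hProb : IsProbabilityMeasure qstar := by
    rw [htilted]; exact isProbabilityMeasure_tilted hexp_int
  have hq_ac : qstar ≪ p := htilted ▸ tilted_absolutelyContinuous p _
  have hp_ac : p ≪ qstar := htilted ▸ absolutelyContinuous_tilted hexp_int
  -- llr qstar p = -h - log Z a.e.
  have hllr : llr qstar p =ᵐ[p] fun x => - h x - Real.log Z := by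
    have h0 : llr p p =ᵐ[p] fun _ => (0 : ℝ) := by
      filter_upwards [Measure.rnDeriv_self p] with x hx
      simp [llr, hx]
    have := llr_tilted_left (μ := p) (ν := p) (f := fun ω => - h ω)
      Measure.AbsolutelyContinuous.rfl hexp_int hmeas.neg.aemeasurable
    rw [← htilted] at this
    filter_upwards [this, h0] with x hx hx0
    rw [hx, hx0, ← hZ]; ring
  have hllr_q : llr qstar p =ᵐ[qstar] fun x => - h x - Real.log Z := hq_ac.ae_le hllr
  have hllr_int : Integrable (llr qstar p) qstar := by
    rw [integrable_congr hllr_q]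
    exact ((hh_int qstar).neg.sub (integrable_const _))
  have hkl_qstar : klDiv qstar p = ((- ∫ ω, h ω ∂qstar - Real.log Z : ℝ) : EReal) := by
    rw [klDiv, if_pos ⟨hq_ac, hllr_int⟩]
    congr 1
    have hneg : Integrable (fun x => - h x) qstar := (hh_int qstar).neg
    rw [integral_congr_ae hllr_q, integral_sub hneg (integrable_const _), integral_neg]
    simp
  have hmain : klDiv qstar p + ((∫ ω, h ω ∂qstar : ℝ) : EReal) = ((- Real.log Z : ℝ) : EReal) := by
    rw [hkl_qstar, ← EReal.coe_add]
    congr 1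
    ring
  refine ⟨hProb, hmain, ?_⟩
  intro q hqProb hqp
  rw [hmain]
  by_cases hint : Integrable (llr q p) q
  · rw [klDiv, if_pos ⟨hqp, hint⟩, ← EReal.coe_add, EReal.coe_le_coe_iff]
    -- key: 0 ≤ KL(q ‖ qstar)
    have hq_qstar : q ≪ qstar := hqp.trans hp_ac
    have hnegq : Integrable (fun x => - h x) q := (hh_int q).neg
    have hint' : Integrable (llr q qstar) q := by
      rw [htilted]
      exact integrable_llr_tilted_right hqp hnegq hint hexp_int
    have hval := integral_llr_tilted_right (μ := q) (ν := p) (f := fun ω => - h ω)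
      hqp hnegq hexp_int hint
    rw [← htilted, ← hZ, integral_neg] at hval
    have h0 := kl_nonneg_aux q qstar hq_qstar hint'
    rw [hval] at h0
    linarith
  · rw [klDiv, if_neg (fun hc => hint hc.2),
      EReal.top_add_of_ne_bot (by simp : ((∫ ω, h ω ∂q : ℝ) : EReal) ≠ ⊥)]
    exact le_top
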